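/- Let ā = (a¹¹, a¹²; a¹², a²²) be a constant symmetric 2×2 matrix with a¹¹ > 0, a²² > 0 and |a¹²| ≤ min{a¹¹, a²²}, and suppose λ¹, λ² lie in the interval ( |a¹¹ − a²²|/(a¹¹ + a²²), 1 − 2|a¹²|/(a¹¹ + a²²) ]. Then the diagonal-neighbor local stiffness entries satisfy: −(1/2)( min{a¹¹, a²²} + a¹² ) < −(1/4)( (1−λ²) a¹¹ + (1−λ¹) a²² ) − (1/2) a¹² ≤ −(1/2)( |a¹²| + a¹² ) ≤ 0, and −(1/2)( min{a¹¹, a²²} − a¹² ) < −(1/4)( (1−λ²) a¹¹ + (1−λ¹) a²² ) + (1/2) a¹² ≤ −(1/2)( |a¹²| − a¹² ) ≤ 0; in particular both quantities are nonpositive. -/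

import Mathlib

theorem stmt_7 (a11 a22 a12 l1 l2 : ℝ)
    (h11 : 0 < a11) (h22 : 0 < a22) (h12 : |a12| ≤ min a11 a22)
    (hl1 : |a11 - a22| / (a11 + a22) < l1 ∧ l1 ≤ 1 - 2 * |a12| / (a11 + a22))
    (hl2 : |a11 - a22| / (a11 + a22) < l2 ∧ l2 ≤ 1 - 2 * |a12| / (a11 + a22)) :
    (-(1/2) * (min a11 a22 + a12)
        < -(1/4) * ((1 - l2) * a11 + (1 - l1) * a22) - (1/2) * a12
      ∧ -(1/4) * ((1 - l2) * a11 + (1 - l1) * a22) - (1/2) * a12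
          ≤ -(1/2) * (|a12| + a12)
      ∧ -(1/2) * (|a12| + a12) ≤ 0)
    ∧ (-(1/2) * (min a11 a22 - a12)
        < -(1/4) * ((1 - l2) * a11 + (1 - l1) * a22) + (1/2) * a12
      ∧ -(1/4) * ((1 - l2) * a11 + (1 - l1) * a22) + (1/2) * a12
          ≤ -(1/2) * (|a12| - a12)
      ∧ -(1/2) * (|a12| - a12) ≤ 0)
    ∧ -(1/4) * ((1 - l2) * a11 + (1 - l1) * a22) - (1/2) * a12 ≤ 0
    ∧ -(1/4) * ((1 - l2) * a11 + (1 - l1) * a22) + (1/2) * a12 ≤ 0 := by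
  have hs : 0 < a11 + a22 := by linarith
  set c : ℝ := 2 * |a12| / (a11 + a22) with hc
  set d : ℝ := |a11 - a22| / (a11 + a22) with hd
  have hcs : c * (a11 + a22) = 2 * |a12| := by
    rw [hc, div_mul_cancel₀ _ hs.ne']
  have hds : d * (a11 + a22) = |a11 - a22| := by
    rw [hd, div_mul_cancel₀ _ hs.ne']
  have hc1 : c ≤ 1 - l1 := by linarith [hl1.2]
  have hc2 : c ≤ 1 - l2 := by linarith [hl2.2]
  have hd1 : 1 - l1 < 1 - d := by linarith [hl1.1]
  have hd2 : 1 - l2 < 1 - d := by linarith [hl2.1]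
  -- lower bound on the sum
  have hlo : 2 * |a12| ≤ (1 - l2) * a11 + (1 - l1) * a22 := by
    have t1 : c * a11 ≤ (1 - l2) * a11 := mul_le_mul_of_nonneg_right hc2 h11.le
    have t2 : c * a22 ≤ (1 - l1) * a22 := mul_le_mul_of_nonneg_right hc1 h22.le
    nlinarith [hcs]
  -- upper bound on the sum
  have hhi : (1 - l2) * a11 + (1 - l1) * a22 < 2 * min a11 a22 := by
    have t1 : (1 - l2) * a11 < (1 - d) * a11 := by
      exact mul_lt_mul_of_pos_right hd2 h11
    have t2 : (1 - l1) * a22 < (1 - d) * a22 := by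
      exact mul_lt_mul_of_pos_right hd1 h22
    have hmin2 : 2 * min a11 a22 = (a11 + a22) - |a11 - a22| := by
      rcases le_total a11 a22 with h | h
      · rw [min_eq_left h, abs_of_nonpos (by linarith)]; ring
      · rw [min_eq_right h, abs_of_nonneg (by linarith)]; ring
    nlinarith [hds]
  have habs : a12 ≤ |a12| := le_abs_self a12
  have habs' : -a12 ≤ |a12| := neg_le_abs a12
  refine ⟨⟨by linarith, by linarith, by linarith⟩,
    ⟨by linarith, by linarith, by linarith⟩, by linarith, by linarith⟩
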